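/- Every singular cone among the hyperplane-arrangement cones is contained in a non-singular one: if K_i = {w : (2D_i - I) X w >= 0} satisfies K_i - K_i ≠ R^d for some activation pattern D_i in D_X, then there exists another pattern D_j in D_X with K_j - K_j = R^d and K_i a proper subset of K_j. -/
import Mathlib
open Matrix

lemma aux_eps {n : ℕ} (c b : Fin n → ℝ) :
    ∃ ε : ℝ, 0 < ε ∧ ∀ k, 0 < c k → 0 < c k + ε * b k := by
  classical
  set F : Finset ℝ :=
    insert (1:ℝ) (Finset.univ.image (fun k => if 0 < c k then c k / (|b k| + 1) else 1)) with hF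
  have hne : F.Nonempty := ⟨1, Finset.mem_insert_self _ _⟩
  have hpos : 0 < F.min' hne := by
    rw [Finset.lt_min'_iff]
    intro y hy
    rw [hF, Finset.mem_insert] at hy
    rcases hy with h | h
    · rw [h]; norm_num
    · rcases Finset.mem_image.1 h with ⟨k, _, hk⟩
      rw [← hk]
      split
      · positivity
      · norm_num
  refine ⟨F.min' hne, hpos, ?_⟩
  intro k hk
  have hle : F.min' hne ≤ c k / (|b k| + 1) := by
    apply Finset.min'_le
    rw [hF]
    refine Finset.mem_insert_of_mem (Finset.mem_image.2 ⟨k, Finset.mem_univ _, ?_⟩)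
    rw [if_pos hk]
  have hb : -|b k| ≤ b k := neg_abs_le _
  have hb2 : (0:ℝ) < |b k| + 1 := by positivity
  have h1 : F.min' hne * (|b k| + 1) ≤ c k := by
    rw [← le_div_iff₀ hb2]; exact hle
  nlinarith [abs_nonneg (b k)]

lemma aux_smul {n d : ℕ} (X : Matrix (Fin n) (Fin d) ℝ) (D : Fin n → ℝ) {w : Fin d → ℝ} {t : ℝ}
    (ht : 0 ≤ t) (hw : ∀ k, 0 ≤ (2 * D k - 1) * X.mulVec w k) (k : Fin n) :
    0 ≤ (2 * D k - 1) * X.mulVec (t • w) k := by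
  rw [mulVec_smul]
  have : (2 * D k - 1) * (t • X.mulVec w) k = t * ((2 * D k - 1) * X.mulVec w k) := by
    simp [Pi.smul_apply]; ring
  rw [this]
  exact mul_nonneg ht (hw k)

lemma aux_span {n d : ℕ} (X : Matrix (Fin n) (Fin d) ℝ) (D : Fin n → ℝ) (u : Fin d → ℝ)
    (hu0 : ∀ k, X.mulVec u k = 0 → ∀ w : Fin d → ℝ, X.mulVec w k = 0)
    (hu : ∀ k, X.mulVec u k ≠ 0 → 0 < (2 * D k - 1) * X.mulVec u k) :
    {x | ∃ v ∈ {w : Fin d → ℝ | ∀ k, 0 ≤ (2 * D k - 1) * X.mulVec w k},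
      ∃ w ∈ {w : Fin d → ℝ | ∀ k, 0 ≤ (2 * D k - 1) * X.mulVec w k}, x = v - w} = Set.univ := by
  ext x
  simp only [Set.mem_setOf_eq, Set.mem_univ, iff_true]
  obtain ⟨ε, hε, heps⟩ := aux_eps (fun k => (2 * D k - 1) * X.mulVec u k)
    (fun k => (2 * D k - 1) * X.mulVec x k)
  have humem : ∀ k, 0 ≤ (2 * D k - 1) * X.mulVec u k := by
    intro k
    by_cases h : X.mulVec u k = 0
    · rw [h, mul_zero]
    · exact (hu k h).le
  have hvmem : ∀ k, 0 ≤ (2 * D k - 1) * X.mulVec (u + ε • x) k := by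
    intro k
    have hcalc : (2 * D k - 1) * X.mulVec (u + ε • x) k
        = (2 * D k - 1) * X.mulVec u k + ε * ((2 * D k - 1) * X.mulVec x k) := by
      rw [mulVec_add, mulVec_smul]
      simp [Pi.add_apply, Pi.smul_apply]; ring
    rw [hcalc]
    by_cases h : X.mulVec u k = 0
    · rw [h, hu0 k h x]; simp
    · exact (heps k (hu k h)).le
  refine ⟨ε⁻¹ • (u + ε • x), fun k => aux_smul X D (by positivity) hvmem k,
    ε⁻¹ • u, fun k => aux_smul X D (by positivity) humem k, ?_⟩
  rw [smul_add, smul_smul, inv_mul_cancel₀ hε.ne', one_smul]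
  abel

/-- Every singular cone among the hyperplane-arrangement cones of `X` is properly contained
in a non-singular one. -/
theorem singular_cone_contained_in_nonsingular {n d : ℕ} (X : Matrix (Fin n) (Fin d) ℝ)
    (patterns : Set (Fin n → ℝ))
    (hpat : patterns =
      {D | ∃ u : Fin d → ℝ, ∀ k, D k = if 0 ≤ X.mulVec u k then (1 : ℝ) else 0})
    (cone : (Fin n → ℝ) → Set (Fin d → ℝ))
    (hcone : ∀ D, cone D = {w | ∀ k, 0 ≤ (2 * D k - 1) * X.mulVec w k})
    (Di : Fin n → ℝ) (hDi : Di ∈ patterns)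
    (hsing : {x | ∃ v ∈ cone Di, ∃ w ∈ cone Di, x = v - w} ≠ Set.univ) :
    ∃ Dj ∈ patterns,
      {x | ∃ v ∈ cone Dj, ∃ w ∈ cone Dj, x = v - w} = Set.univ ∧
      cone Di ⊂ cone Dj := by
  classical
  subst hpat
  obtain ⟨u0, hDi0⟩ := hDi
  have hDival : ∀ k, Di k = 1 ∨ Di k = 0 := by
    intro k; rw [hDi0 k]; split <;> simp
  have hsne : ∀ k, (2 * Di k - 1) ≠ 0 := by
    intro k; rcases hDival k with h | h <;> rw [h] <;> norm_num
  -- rows that are identically zero give zero coordinates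
  have hrow : ∀ k, (∀ j, X k j = 0) → ∀ w : Fin d → ℝ, X.mulVec w k = 0 := by
    intro k h w
    simp [Matrix.mulVec, dotProduct, h]
  -- implicit equalities of the cone of Di
  set EqK : Fin n → Prop := fun k => ∀ w ∈ cone Di, X.mulVec w k = 0 with hEqK
  -- choose witnesses with strict inequality at non-implicit coordinates
  have hchoice : ∀ k, ∃ w, w ∈ cone Di ∧ (¬ EqK k → X.mulVec w k ≠ 0) := by
    intro k
    by_cases h : EqK k
    · refine ⟨0, ?_, fun h' => absurd h h'⟩
      rw [hcone]; intro k'; simp [Matrix.mulVec_zero]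
    · have h' : ∃ w ∈ cone Di, X.mulVec w k ≠ 0 := by
        by_contra hno
        push_neg at hno
        exact h hno
      obtain ⟨w, hw, hw'⟩ := h'
      exact ⟨w, hw, fun _ => hw'⟩
  choose f hfmem hfne using hchoice
  set wst : Fin d → ℝ := ∑ k : Fin n, f k with hwst
  have hmvsum : X.mulVec wst = ∑ k : Fin n, X.mulVec (f k) := by
    simp only [hwst, ← Matrix.mulVecLin_apply]
    exact map_sum _ _ _
  have hwst_mem : wst ∈ cone Di := by
    rw [hcone]
    intro k
    rw [hmvsum, Finset.sum_apply, Finset.mul_sum]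
    apply Finset.sum_nonneg
    intro j _
    have hj := hfmem j
    rw [hcone] at hj
    exact hj k
  have hwst_eq : ∀ k, EqK k → X.mulVec wst k = 0 := by
    intro k hk
    rw [hmvsum, Finset.sum_apply]
    exact Finset.sum_eq_zero fun j _ => hk (f j) (hfmem j)
  have hwst_strict : ∀ k, ¬ EqK k → 0 < (2 * Di k - 1) * X.mulVec wst k := by
    intro k hk
    rw [hmvsum, Finset.sum_apply, Finset.mul_sum]
    apply Finset.sum_pos'
    · intro j _
      have hj := hfmem j
      rw [hcone] at hj
      exact hj k
    · refine ⟨k, Finset.mem_univ _, ?_⟩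
      have h1 : (2 * Di k - 1) * X.mulVec (f k) k ≠ 0 :=
        mul_ne_zero (hsne k) (hfne k hk)
      have h2 := hfmem k
      rw [hcone] at h2
      exact lt_of_le_of_ne (h2 k) (Ne.symm h1)
  -- an implicit-equality coordinate with a nonzero row exists
  have hk0 : ∃ k0, EqK k0 ∧ ¬ ∀ j, X k0 j = 0 := by
    by_contra hcon
    push_neg at hcon
    apply hsing
    simp only [hcone]
    apply aux_span X Di wst
    · intro k hk w
      by_cases h : EqK k
      · exact hrow k (hcon k h) w
      · exfalso
        have := hwst_strict k h
        rw [hk, mul_zero] at this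
        exact lt_irrefl _ this
    · intro k hk
      by_cases h : EqK k
      · exact absurd (hwst_eq k h) hk
      · exact hwst_strict k h
  obtain ⟨k0, hk0imp, hk0row⟩ := hk0
  obtain ⟨j0, hj0⟩ := not_forall.mp hk0row
  have hnontriv : Nontrivial (Fin d → ℝ) := by
    refine ⟨Pi.single j0 1, 0, fun h => ?_⟩
    have := congrFun h j0
    simp [Pi.single_eq_same] at this
  -- generic vector avoiding all the nonzero-row hyperplanes
  have hz : ∃ z : Fin d → ℝ, ∀ k, ¬ (∀ j, X k j = 0) → X.mulVec z k ≠ 0 := by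
    by_contra hcon
    push_neg at hcon
    set φ : Fin n → ((Fin d → ℝ) →ₗ[ℝ] ℝ) :=
      fun k => (LinearMap.proj k).comp X.mulVecLin with hφ
    have hφval : ∀ k z, φ k z = X.mulVec z k := by
      intro k z; simp [hφ, Matrix.mulVecLin_apply]
    set p : Fin n → Subspace ℝ (Fin d → ℝ) :=
      fun k => if (∀ j, X k j = 0) then ⊥ else LinearMap.ker (φ k) with hp
    have hcover : ⋃ k, (p k : Set (Fin d → ℝ)) = Set.univ := by
      ext z
      simp only [Set.mem_iUnion, Set.mem_univ, iff_true]
      obtain ⟨k, hk1, hk2⟩ := hcon z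
      have hk1' : ¬ ∀ j, X k j = 0 := by
        intro hall
        obtain ⟨j, hj⟩ := hk1
        exact hj (hall j)
      refine ⟨k, ?_⟩
      simp only [hp, if_neg hk1', SetLike.mem_coe, LinearMap.mem_ker, hφval]
      exact hk2
    obtain ⟨k, hk⟩ := Subspace.exists_eq_top_of_iUnion_eq_univ hcover
    by_cases hr : ∀ j, X k j = 0
    · rw [hp] at hk
      simp only [if_pos hr] at hk
      exact bot_ne_top hk
    · rw [hp] at hk
      simp only [if_neg hr] at hk
      rw [LinearMap.ker_eq_top] at hk
      push_neg at hr
      obtain ⟨j, hj⟩ := hr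
      have := congrArg (fun g => g (Pi.single j 1)) hk
      simp only [LinearMap.zero_apply] at this
      rw [hφval] at this
      rw [Matrix.mulVec_single] at this
      simp at this
      exact hj this
  obtain ⟨z, hzgen⟩ := hz
  -- small perturbation
  obtain ⟨ε, hε, hεs⟩ := aux_eps (fun k => (2 * Di k - 1) * X.mulVec wst k)
    (fun k => (2 * Di k - 1) * X.mulVec z k)
  set u : Fin d → ℝ := wst + ε • z with hu
  have hmu : ∀ k, X.mulVec u k = X.mulVec wst k + ε * X.mulVec z k := by
    intro k
    rw [hu, Matrix.mulVec_add, Matrix.mulVec_smul]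
    simp [Pi.add_apply, Pi.smul_apply]
  have h1 : ∀ k, ¬ EqK k → 0 < (2 * Di k - 1) * X.mulVec u k := by
    intro k hk
    have := hεs k (hwst_strict k hk)
    rw [hmu]
    ring_nf
    ring_nf at this
    linarith
  have h2 : ∀ k, EqK k → X.mulVec u k = ε * X.mulVec z k := by
    intro k hk
    rw [hmu, hwst_eq k hk, zero_add]
  have h3 : ∀ k, ¬ (∀ j, X k j = 0) → X.mulVec u k ≠ 0 := by
    intro k hkrow
    by_cases hk : EqK k
    · rw [h2 k hk]
      exact mul_ne_zero hε.ne' (hzgen k hkrow)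
    · intro h0
      have := h1 k hk
      rw [h0, mul_zero] at this
      exact lt_irrefl _ this
  -- the new pattern
  set Dj : Fin n → ℝ := fun k => if 0 ≤ X.mulVec u k then (1 : ℝ) else 0 with hDj
  have hg : ∀ k, X.mulVec u k ≠ 0 → 0 < (2 * Dj k - 1) * X.mulVec u k := by
    intro k h
    simp only [hDj]
    by_cases h' : 0 ≤ X.mulVec u k
    · rw [if_pos h']
      have : 0 < X.mulVec u k := lt_of_le_of_ne h' (Ne.symm h)
      nlinarith
    · rw [if_neg h']
      push_neg at h'
      nlinarith
  have hDj_eq : ∀ k, ¬ EqK k → Dj k = Di k := by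
    intro k hk
    have hu1 := h1 k hk
    rcases hDival k with h | h
    · rw [h] at hu1
      norm_num at hu1
      simp only [hDj]
      rw [if_pos hu1.le, h]
    · rw [h] at hu1
      norm_num at hu1
      simp only [hDj]
      rw [if_neg (not_le.2 hu1), h]
  have humem : u ∈ cone Dj := by
    rw [hcone]
    intro k
    by_cases h : X.mulVec u k = 0
    · rw [h, mul_zero]
    · exact (hg k h).le
  have hunotmem : u ∉ cone Di := by
    intro hmem
    exact h3 k0 hk0row (hk0imp u hmem)
  have hsub : cone Di ⊆ cone Dj := by
    intro w hw
    have hw0 : w ∈ cone Di := hw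
    rw [hcone] at hw ⊢
    intro k
    by_cases hk : EqK k
    · rw [hk w hw0, mul_zero]
    · rw [hDj_eq k hk]
      exact hw k
  refine ⟨Dj, ⟨u, fun k => rfl⟩, ?_, ?_⟩
  · simp only [hcone]
    apply aux_span X Dj u
    · intro k hk w
      by_cases hr : ∀ j, X k j = 0
      · exact hrow k hr w
      · exact absurd hk (h3 k hr)
    · exact hg
  · exact (Set.ssubset_iff_of_subset hsub).2 ⟨u, humem, hunotmem⟩
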